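/- (Chung's Lemma, recursion form) Suppose {b_n} is a sequence of nonnegative reals such that for all n ≥ n₀, b_{n+1} ≤ (1 − c/n^s) b_n + c'/n^t, where 0 < s < 1, t > s, c > 0, c' > 0. Then limsup_{n→∞} n^{t−s} b_n ≤ c'/c. -/
import Mathlib

open Filter

private lemma chung_aux_exp_le (x : ℝ) (hx : 0 ≤ x) :
    Real.exp x ≤ 1 + x * Real.exp x := by
  have h := Real.add_one_le_exp (-x)
  rw [Real.exp_neg] at h
  have hp := Real.exp_pos x
  have h3 : (1 - x) * Real.exp x ≤ 1 := by
    have h4 := mul_le_mul_of_nonneg_right h hp.le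
    rw [inv_mul_cancel₀ hp.ne'] at h4
    nlinarith
  nlinarith

private lemma chung_aux_rpow_bound (r x : ℝ) (hr : 0 < r) (hx : 0 < x) (hx1 : x ≤ 1) :
    (1 + x) ^ r ≤ 1 + (r * Real.exp r) * x := by
  have h1 : (1 + x : ℝ) ≤ Real.exp x := by
    have := Real.add_one_le_exp x; linarith
  have h2 : (1 + x) ^ r ≤ (Real.exp x) ^ r :=
    Real.rpow_le_rpow (by linarith) h1 hr.le
  have h3 : (Real.exp x) ^ r = Real.exp (x * r) := by
    rw [Real.rpow_def_of_pos (Real.exp_pos x), Real.log_exp]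
  have h4 : Real.exp (x * r) ≤ 1 + (x * r) * Real.exp (x * r) :=
    chung_aux_exp_le _ (by positivity)
  have h5 : Real.exp (x * r) ≤ Real.exp r :=
    Real.exp_le_exp.mpr (by nlinarith)
  have h6 : (x * r) * Real.exp (x * r) ≤ (x * r) * Real.exp r :=
    mul_le_mul_of_nonneg_left h5 (by positivity)
  calc (1 + x) ^ r ≤ Real.exp (x * r) := h3 ▸ h2
    _ ≤ 1 + (x * r) * Real.exp (x * r) := h4
    _ ≤ 1 + (x * r) * Real.exp r := by linarith
    _ = 1 + (r * Real.exp r) * x := by ring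

/-- Contraction recursion forces convergence to 0. -/
private lemma chung_aux_contraction (v d : ℕ → ℝ) (hv : ∀ n, 0 ≤ v n)
    (hdsum : Tendsto (fun j => ∑ i ∈ Finset.range j, d i) atTop atTop)
    (hrec : ∀ n, v (n + 1) ≤ (1 - d n) * v n) :
    Tendsto v atTop (nhds 0) := by
  have key : ∀ j, v j ≤ v 0 * Real.exp (-(∑ i ∈ Finset.range j, d i)) := by
    intro j
    induction j with
    | zero => simp
    | succ j ih =>
      calc v (j + 1) ≤ (1 - d j) * v j := hrec j
        _ ≤ Real.exp (-(d j)) * v j := by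
            refine mul_le_mul_of_nonneg_right ?_ (hv j)
            have := Real.add_one_le_exp (-(d j)); linarith
        _ ≤ Real.exp (-(d j)) * (v 0 * Real.exp (-(∑ i ∈ Finset.range j, d i))) :=
            mul_le_mul_of_nonneg_left ih (Real.exp_nonneg _)
        _ = v 0 * Real.exp (-(∑ i ∈ Finset.range (j + 1), d i)) := by
            rw [Finset.sum_range_succ, neg_add, Real.exp_add]; ring
  have htend : Tendsto (fun j => v 0 * Real.exp (-(∑ i ∈ Finset.range j, d i)))
      atTop (nhds 0) := by
    have h := (Real.tendsto_exp_neg_atTop_nhds_zero).comp hdsum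
    have h2 := h.const_mul (v 0)
    simpa using h2
  exact squeeze_zero hv key htend

set_option maxHeartbeats 1000000 in
/-- Chung's Lemma (recursion form): if `{b_n}` is a sequence of nonnegative reals with
`b_{n+1} ≤ (1 − c/n^s) b_n + c'/n^t` for all `n ≥ n₀`, where `0 < s < 1`, `t > s`,
`c > 0`, `c' > 0` (and `c/n^s ≤ 1` for `n ≥ n₀`), then
`limsup_{n→∞} n^{t−s} b_n ≤ c'/c`. -/
theorem stmt_8 (b : ℕ → ℝ) (hb : ∀ n, 0 ≤ b n) (n₀ : ℕ) (hn₀ : 1 ≤ n₀)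
    (s t c c' : ℝ) (hs : 0 < s) (hs1 : s < 1) (hts : s < t) (hc : 0 < c) (hc' : 0 < c')
    (hcontr : ∀ n : ℕ, n₀ ≤ n → c / (n : ℝ) ^ s ≤ 1)
    (hrec : ∀ n : ℕ, n₀ ≤ n →
      b (n + 1) ≤ (1 - c / (n : ℝ) ^ s) * b n + c' / (n : ℝ) ^ t) :
    limsup (fun n : ℕ => (n : ℝ) ^ (t - s) * b n) atTop ≤ c' / c := by
  have hr0 : 0 < t - s := by linarith
  set r : ℝ := t - s with hrdef
  clear_value r
  set u : ℕ → ℝ := fun n => (n : ℝ) ^ r * b n with hudef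
  have hun : ∀ m : ℕ, u m = (m : ℝ) ^ r * b m := fun m => by rw [hudef]
  clear_value u
  have hu0 : ∀ n, 0 ≤ u n := fun n => by
    rw [hun n]; exact mul_nonneg (Real.rpow_nonneg (Nat.cast_nonneg n) r) (hb n)
  have hK0 : 0 < c' / c := div_pos hc' hc
  set K : ℝ := c' / c with hKdef
  have hcK : c * K = c' := by rw [hKdef]; field_simp
  clear_value K
  -- main eventual bound
  have main : ∀ ε : ℝ, 0 < ε → ∀ᶠ n in atTop, u n ≤ K + ε := by
    intro ε hε
    have hden : 0 < c' + K + ε := by positivity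
    obtain ⟨η, hηdef⟩ : ∃ η : ℝ, η = min (c / 2) (c * ε / 2 / (c' + K + ε)) := ⟨_, rfl⟩
    have hη0 : 0 < η := hηdef ▸ lt_min (by linarith) (by positivity)
    have hηc : η < c := lt_of_le_of_lt (hηdef ▸ min_le_left _ _) (by linarith)
    have hη2 : η * (c' + K + ε) ≤ c * ε / 2 :=
      (le_div_iff₀ hden).mp (hηdef ▸ min_le_right _ _)
    obtain ⟨M, hMdef⟩ : ∃ M : ℝ, M = K + ε / 2 := ⟨_, rfl⟩
    have hM0 : 0 < M := by rw [hMdef]; positivity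
    obtain ⟨c₁, hc₁def⟩ : ∃ c₁ : ℝ, c₁ = c - η := ⟨_, rfl⟩
    obtain ⟨c₂, hc₂def⟩ : ∃ c₂ : ℝ, c₂ = c' * (1 + η) := ⟨_, rfl⟩
    have hc₁0 : 0 < c₁ := by rw [hc₁def]; linarith
    have hc₁c : c₁ ≤ c := by rw [hc₁def]; linarith
    have hc₂M : c₂ ≤ c₁ * M := by
      rw [hc₂def, hc₁def, hMdef]
      have hηε : 0 ≤ η * ε := by positivity
      linarith only [hη2, hηε, hcK]
    obtain ⟨A, hAdef⟩ : ∃ A : ℝ, A = r * Real.exp r := ⟨_, rfl⟩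
    have hA0 : 0 < A := by rw [hAdef]; positivity
    -- eventual pointwise recursion
    have hev : ∀ᶠ n : ℕ in atTop,
        u (n + 1) ≤ (1 - c₁ * (((n : ℝ) ^ s)⁻¹)) * u n + c₂ * (((n : ℝ) ^ s)⁻¹) ∧
          c₁ * (((n : ℝ) ^ s)⁻¹) ≤ 1 := by
      have h1s : (0 : ℝ) < 1 - s := by linarith
      have htpow : Tendsto (fun n : ℕ => (n : ℝ) ^ (1 - s)) atTop atTop :=
        (tendsto_rpow_atTop h1s).comp tendsto_natCast_atTop_atTop
      filter_upwards [eventually_ge_atTop n₀, eventually_ge_atTop 1,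
        htpow.eventually_ge_atTop (A / η)] with n hn0 hn1 hnA
      have hx : (0 : ℝ) < (n : ℝ) := by exact_mod_cast hn1
      have hx1 : (1 : ℝ) ≤ (n : ℝ) := by exact_mod_cast hn1
      have hxs : (0 : ℝ) < (n : ℝ) ^ s := Real.rpow_pos_of_pos hx s
      have hxt : (0 : ℝ) < (n : ℝ) ^ t := Real.rpow_pos_of_pos hx t
      have hxr : (0 : ℝ) < (n : ℝ) ^ r := Real.rpow_pos_of_pos hx r
      obtain ⟨X, hXdef⟩ : ∃ X : ℝ, X = ((n : ℝ) ^ s)⁻¹ := ⟨_, rfl⟩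
      have hX0 : 0 < X := hXdef ▸ inv_pos.mpr hxs
      have hX1 : X ≤ 1 := by
        rw [hXdef, inv_le_one_iff₀]
        right
        exact Real.one_le_rpow hx1 hs.le
      obtain ⟨ρ, hρdef⟩ : ∃ ρ : ℝ, ρ = (1 + 1 / (n : ℝ)) ^ r := ⟨_, rfl⟩
      have hρ1 : 1 ≤ ρ := by
        rw [hρdef]
        exact Real.one_le_rpow (le_add_of_nonneg_right (by positivity)) hr0.le
      have hρA : ρ ≤ 1 + A * (1 / (n : ℝ)) := by
        rw [hρdef, hAdef]
        exact chung_aux_rpow_bound r (1 / (n : ℝ)) hr0 (by positivity)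
          (by rw [div_le_one hx]; exact hx1)
      have hpow1 : (n : ℝ) ^ (1 - s) = (n : ℝ) * ((n : ℝ) ^ s)⁻¹ := by
        rw [show (1 : ℝ) - s = 1 + (-s) by ring, Real.rpow_add hx, Real.rpow_one,
          Real.rpow_neg hx.le]
      have hAX : A * (1 / (n : ℝ)) ≤ η * X := by
        have hA' : A ≤ η * ((n : ℝ) ^ (1 - s)) := (div_le_iff₀' hη0).mp hnA
        rw [hpow1, ← hXdef] at hA'
        rw [mul_one_div, div_le_iff₀ hx]
        linarith only [hA']
      have hρX : ρ ≤ 1 + η * X := by linarith only [hρA, hAX]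
      have hρη : ρ ≤ 1 + η := by
        have h7 := mul_le_of_le_one_right hη0.le hX1
        linarith only [hρX, h7]
      -- rewrite (n+1)^r
      have hsplit : ((n : ℝ) + 1) ^ r = ρ * (n : ℝ) ^ r := by
        rw [hρdef, ← Real.mul_rpow (by positivity) hx.le]
        congr 1
        field_simp
      have hcast : ((n + 1 : ℕ) : ℝ) = (n : ℝ) + 1 := by push_cast; ring
      have hcn : c / (n : ℝ) ^ s ≤ 1 := hcontr n hn0
      have hcs : c / (n : ℝ) ^ s = c * X := by rw [hXdef, div_eq_mul_inv]
      have hnonneg : 0 ≤ 1 - c * X := by rw [← hcs]; linarith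
      -- the recursion step
      have hb1 : u (n + 1) ≤ ρ * (n : ℝ) ^ r * ((1 - c * X) * b n + c' / (n : ℝ) ^ t) := by
        have h := hrec n hn0
        rw [hcs] at h
        calc u (n + 1) = ((n : ℝ) + 1) ^ r * b (n + 1) := by rw [hun (n + 1), hcast]
          _ ≤ ((n : ℝ) + 1) ^ r * ((1 - c * X) * b n + c' / (n : ℝ) ^ t) :=
              mul_le_mul_of_nonneg_left h (Real.rpow_nonneg (by positivity) r)
          _ = ρ * (n : ℝ) ^ r * ((1 - c * X) * b n + c' / (n : ℝ) ^ t) := by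
              rw [hsplit]
      have hpow2 : (n : ℝ) ^ r / (n : ℝ) ^ t = X := by
        rw [hXdef, ← Real.rpow_neg hx.le, ← Real.rpow_sub hx]
        congr 1
        rw [hrdef]; ring
      have hb2 : u (n + 1) ≤ (ρ * (1 - c * X)) * u n + c' * ρ * X := by
        have hid : ρ * (n : ℝ) ^ r * ((1 - c * X) * b n + c' / (n : ℝ) ^ t)
            = (ρ * (1 - c * X)) * ((n : ℝ) ^ r * b n)
              + c' * ρ * ((n : ℝ) ^ r / (n : ℝ) ^ t) := by ring
        rw [hid, hpow2, ← hun n] at hb1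
        exact hb1
      constructor
      · -- coefficient bounds
        have hcoef : ρ * (1 - c * X) ≤ 1 - c₁ * X := by
          have h1 : ρ * (1 - c * X) ≤ (1 + η * X) * (1 - c * X) :=
            mul_le_mul_of_nonneg_right hρX hnonneg
          have h2 : (1 + η * X) * (1 - c * X) ≤ 1 - c₁ * X := by
            rw [hc₁def]
            have h8 : 0 ≤ η * c * (X * X) := by positivity
            nlinarith only [h8]
          linarith
        have hterm : c' * ρ * X ≤ c₂ * X := by
          have h3 : c' * ρ ≤ c₂ := by
            rw [hc₂def]; exact mul_le_mul_of_nonneg_left hρη hc'.le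
          exact mul_le_mul_of_nonneg_right h3 hX0.le
        have hmono : (ρ * (1 - c * X)) * u n ≤ (1 - c₁ * X) * u n :=
          mul_le_mul_of_nonneg_right hcoef (hu0 n)
        rw [← hXdef]
        linarith only [hb2, hmono, hterm]
      · rw [← hXdef]
        have h4 : c₁ * X ≤ c * X := mul_le_mul_of_nonneg_right hc₁c hX0.le
        rw [← hcs] at h4
        linarith
    -- extract N
    obtain ⟨N, hN⟩ := eventually_atTop.mp hev
    obtain ⟨v, hvdef⟩ : ∃ v : ℕ → ℝ, v = fun n => max (u n - M) 0 := ⟨_, rfl⟩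
    have hv0 : ∀ n, 0 ≤ v n := fun n => by rw [hvdef]; exact le_max_right _ _
    have hvu : ∀ n, u n - M ≤ v n := fun n => by rw [hvdef]; exact le_max_left _ _
    obtain ⟨d, hddef⟩ : ∃ d : ℕ → ℝ, d = fun j => c₁ * (((j + N : ℕ) : ℝ) ^ s)⁻¹ := ⟨_, rfl⟩
    have hd0 : ∀ j, 0 ≤ d j := fun j => by rw [hddef]; positivity
    have hwrec : ∀ j, v (j + 1 + N) ≤ (1 - d j) * v (j + N) := by
      intro j
      obtain ⟨h1, h2⟩ := hN (j + N) (Nat.le_add_left N j)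
      have hdj : d j = c₁ * (((j + N : ℕ) : ℝ) ^ s)⁻¹ := by rw [hddef]
      have h1d : 0 ≤ 1 - d j := by rw [hdj]; linarith
      have step : u (j + N + 1) - M ≤ (1 - d j) * v (j + N) := by
        have hXn : (0 : ℝ) ≤ (((j + N : ℕ) : ℝ) ^ s)⁻¹ := by positivity
        have hc2 : c₂ * (((j + N : ℕ) : ℝ) ^ s)⁻¹ ≤ c₁ * M * (((j + N : ℕ) : ℝ) ^ s)⁻¹ :=
          mul_le_mul_of_nonneg_right hc₂M hXn
        have hmul : (1 - d j) * (u (j + N) - M) ≤ (1 - d j) * v (j + N) :=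
          mul_le_mul_of_nonneg_left (hvu _) h1d
        have expand : (1 - d j) * (u (j + N) - M) =
            (1 - c₁ * (((j + N : ℕ) : ℝ) ^ s)⁻¹) * u (j + N)
              + c₁ * M * (((j + N : ℕ) : ℝ) ^ s)⁻¹ - M := by
          rw [hdj]; ring
        rw [expand] at hmul
        linarith
      have hveq : v (j + N + 1) = max (u (j + N + 1) - M) 0 := by rw [hvdef]
      have hfin : v (j + N + 1) ≤ (1 - d j) * v (j + N) := by
        rw [hveq]
        exact max_le step (mul_nonneg h1d (hv0 _))
      have heq : j + 1 + N = j + N + 1 := by omega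
      rw [heq]
      exact hfin
    -- divergence of partial sums of d
    have hdsum : Tendsto (fun j => ∑ i ∈ Finset.range j, d i) atTop atTop := by
      rw [← not_summable_iff_tendsto_nat_atTop_of_nonneg hd0]
      intro hsum
      rw [hddef] at hsum
      have hsum2 : Summable (fun j : ℕ => c₁ * ((j : ℝ) ^ s)⁻¹) :=
        (_root_.summable_nat_add_iff N).mp hsum
      have hsum3 : Summable (fun j : ℕ => ((j : ℝ) ^ s)⁻¹) := by
        have h5 := hsum2.mul_left c₁⁻¹
        simpa [← mul_assoc, inv_mul_cancel₀ hc₁0.ne'] using h5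
      have := Real.summable_nat_rpow_inv.mp hsum3
      linarith
    -- apply contraction lemma
    have hvto : Tendsto (fun j => v (j + N)) atTop (nhds 0) :=
      chung_aux_contraction (fun j => v (j + N)) d (fun j => hv0 _) hdsum hwrec
    have hvtend : Tendsto v atTop (nhds 0) := (tendsto_add_atTop_iff_nat N).mp hvto
    have hsmall : ∀ᶠ n in atTop, v n < ε / 2 :=
      hvtend.eventually_lt_const (by linarith)
    filter_upwards [hsmall] with n hn
    have h6 := hvu n
    rw [hMdef] at h6
    linarith
  -- conclude from eventual bounds
  by_contra hcon
  push_neg at hcon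
  set L := limsup u atTop with hL
  have hε : 0 < (L - K) / 2 := by linarith
  have hle : L ≤ K + (L - K) / 2 := by
    rw [hL]
    apply Filter.limsup_le_of_le
    · exact Filter.isCoboundedUnder_le_of_le atTop (fun n => hu0 n)
    · exact main _ hε
  linarith
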